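/- arXiv:2604.04397 — 2 statements merged into one kernel-verified Lean document; each statement's English description precedes it below -/
import Mathlib

section
/- Let A be a C*-algebra and x ∈ A. Then x = b·c where b = (x x*)^{1/4} and c = lim_{n→∞} (1/n + x x*)^{-1/4} x (the limit exists in norm), and moreover ‖b‖² = ‖x‖ = ‖c‖². -/
open Filter Topology

section RealEstimates

lemma rpow_pow_quarter {t : ℝ} (ht : 0 ≤ t) : (t ^ (1/4:ℝ)) ^ (4:ℕ) = t := by
  rw [← Real.rpow_natCast (t ^ (1/4:ℝ)) 4, ← Real.rpow_mul ht]
  norm_num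

lemma aux4 {s t : ℝ} (hs : 0 < s) (ht : 0 ≤ t) :
    0 ≤ t ^ (1/4:ℝ) - t ^ (1/2:ℝ) * (s + t) ^ (-(1/4):ℝ) ∧
      t ^ (1/4:ℝ) - t ^ (1/2:ℝ) * (s + t) ^ (-(1/4):ℝ) ≤ s ^ (1/4:ℝ) := by
  have hst : (0:ℝ) < s + t := by linarith
  set u := t ^ (1/4:ℝ) with hu_def
  set v := (s + t) ^ (1/4:ℝ) with hv_def
  have hu : 0 ≤ u := Real.rpow_nonneg ht _
  have hv : 0 < v := Real.rpow_pos_of_pos hst _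
  have huv : u ≤ v := Real.rpow_le_rpow ht (by linarith) (by norm_num)
  have hu4 : u ^ (4:ℕ) = t := rpow_pow_quarter ht
  have hv4 : v ^ (4:ℕ) = s + t := rpow_pow_quarter hst.le
  have ht2 : t ^ (1/2:ℝ) = u ^ (2:ℕ) := by
    rw [← Real.rpow_natCast u 2, hu_def, ← Real.rpow_mul ht]; norm_num
  have hinv : (s + t) ^ (-(1/4):ℝ) = v⁻¹ := by
    rw [Real.rpow_neg hst.le]
  rw [ht2, hinv]
  constructor
  · have : u ^ (2:ℕ) * v⁻¹ ≤ u := by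
      rw [mul_inv_le_iff₀ hv]
      calc u ^ (2:ℕ) = u * u := sq u
        _ ≤ u * v := by nlinarith
    linarith
  · set w := u - u ^ (2:ℕ) * v⁻¹ with hw_def
    have hw0 : 0 ≤ w := by
      have : u ^ (2:ℕ) * v⁻¹ ≤ u := by
        rw [mul_inv_le_iff₀ hv]; nlinarith
      simpa [hw_def] using sub_nonneg.mpr this
    have hw4 : w ^ (4:ℕ) ≤ s := by
      have key : (u * (v - u)) ^ (4:ℕ) ≤ (v^(4:ℕ) - u^(4:ℕ)) * v ^ (4:ℕ) := by
        have h1 : 0 ≤ v - u := sub_nonneg.mpr huv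
        have h2 : u^(4:ℕ) * (v-u)^(3:ℕ) ≤ v^(4:ℕ) * v^(3:ℕ) :=
          mul_le_mul (pow_le_pow_left₀ hu huv 4) (pow_le_pow_left₀ h1 (by linarith) 3)
            (by positivity) (by positivity)
        have h3 : v^(3:ℕ) ≤ v^3 + v^2*u + v*u^2 + u^3 := by
          nlinarith [mul_nonneg (mul_nonneg hv.le hv.le) hu,
            mul_nonneg (mul_nonneg hv.le hu) hu, mul_nonneg (mul_nonneg hu hu) hu]
        calc (u*(v-u))^(4:ℕ) = (v-u) * (u^4 * (v-u)^3) := by ring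
          _ ≤ (v-u) * (v^4 * v^3) := mul_le_mul_of_nonneg_left h2 h1
          _ ≤ (v-u) * ((v^3 + v^2*u + v*u^2 + u^3) * v^4) := by
              refine mul_le_mul_of_nonneg_left ?_ h1
              calc v^4 * v^3 = v^3 * v^4 := by ring
                _ ≤ (v^3 + v^2*u + v*u^2 + u^3) * v^4 :=
                    mul_le_mul_of_nonneg_right h3 (by positivity)
          _ = (v^4 - u^4) * v^4 := by ring
      have hw_eq : w = u * (v - u) / v := by
        rw [hw_def, eq_div_iff hv.ne', sub_mul, mul_assoc, inv_mul_cancel₀ hv.ne']; ring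
      have : w ^ (4:ℕ) = (u * (v-u))^(4:ℕ) / v ^(4:ℕ) := by
        rw [hw_eq, div_pow]
      rw [this, div_le_iff₀ (by positivity)]
      calc (u * (v-u))^(4:ℕ) ≤ (v^(4:ℕ) - u^(4:ℕ)) * v^(4:ℕ) := key
        _ = s * v ^ (4:ℕ) := by rw [hv4, hu4]; ring_nf
    calc w = (w ^ (4:ℕ)) ^ (1/4:ℝ) := by
          rw [← Real.rpow_natCast w 4, ← Real.rpow_mul hw0]; norm_num
      _ ≤ s ^ (1/4:ℝ) := Real.rpow_le_rpow (by positivity) hw4 (by norm_num)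

lemma aux2 {s t : ℝ} (hs : 0 < s) (ht : 0 ≤ t) :
    0 ≤ t ^ (1/2:ℝ) - t * (s + t) ^ (-(1/2):ℝ) ∧
      t ^ (1/2:ℝ) - t * (s + t) ^ (-(1/2):ℝ) ≤ s ^ (1/2:ℝ) := by
  have hst : (0:ℝ) < s + t := by linarith
  set u := t ^ (1/2:ℝ) with hu_def
  set v := (s + t) ^ (1/2:ℝ) with hv_def
  have hu : 0 ≤ u := Real.rpow_nonneg ht _
  have hv : 0 < v := Real.rpow_pos_of_pos hst _
  have huv : u ≤ v := Real.rpow_le_rpow ht (by linarith) (by norm_num)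
  have hu2 : u ^ (2:ℕ) = t := by
    rw [← Real.rpow_natCast u 2, hu_def, ← Real.rpow_mul ht]; norm_num
  have hv2 : v ^ (2:ℕ) = s + t := by
    rw [← Real.rpow_natCast v 2, hv_def, ← Real.rpow_mul hst.le]; norm_num
  have hinv : (s + t) ^ (-(1/2):ℝ) = v⁻¹ := by
    rw [Real.rpow_neg hst.le]
  rw [hinv, ← hu2]
  constructor
  · have : u ^ (2:ℕ) * v⁻¹ ≤ u := by
      rw [mul_inv_le_iff₀ hv]; nlinarith
    linarith
  · set w := u - u ^ (2:ℕ) * v⁻¹ with hw_def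
    have hw0 : 0 ≤ w := by
      have : u ^ (2:ℕ) * v⁻¹ ≤ u := by
        rw [mul_inv_le_iff₀ hv]; nlinarith
      simpa [hw_def] using sub_nonneg.mpr this
    have hw2 : w ^ (2:ℕ) ≤ s := by
      have key : (u * (v - u)) ^ (2:ℕ) ≤ (v^(2:ℕ) - u^(2:ℕ)) * v ^ (2:ℕ) := by
        nlinarith [mul_nonneg hu (sub_nonneg.mpr huv)]
      have hw_eq : w = u * (v - u) / v := by
        rw [hw_def, eq_div_iff hv.ne', sub_mul, mul_assoc, inv_mul_cancel₀ hv.ne']; ring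
      have : w ^ (2:ℕ) = (u * (v-u))^(2:ℕ) / v ^(2:ℕ) := by rw [hw_eq, div_pow]
      rw [this, div_le_iff₀ (by positivity)]
      calc (u * (v-u))^(2:ℕ) ≤ (v^(2:ℕ) - u^(2:ℕ)) * v^(2:ℕ) := key
        _ = s * v ^ (2:ℕ) := by rw [hv2, hu2]; ring_nf
    calc w = (w ^ (2:ℕ)) ^ (1/2:ℝ) := by
          rw [← Real.rpow_natCast w 2, ← Real.rpow_mul hw0]; norm_num
      _ ≤ s ^ (1/2:ℝ) := Real.rpow_le_rpow (by positivity) hw2 (by norm_num)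

end RealEstimates

section CStar
variable {A : Type*} [NonUnitalCStarAlgebra A]

lemma inr_mul_star (x : A) :
    (x : Unitization ℂ A) * star (x : Unitization ℂ A) = ((x * star x : A) : Unitization ℂ A) := by
  rw [Unitization.inr_mul, Unitization.inr_star]

lemma cfc_mul_self_mul_cfc (x : A) (f : ℝ → ℝ)
    (hf : ContinuousOn f (spectrum ℝ ((x * star x : A) : Unitization ℂ A))) :
    cfc f ((x * star x : A) : Unitization ℂ A) * ((x * star x : A) : Unitization ℂ A) *
        cfc f ((x * star x : A) : Unitization ℂ A)
      = cfc (fun t : ℝ => f t ^ 2 * t) ((x * star x : A) : Unitization ℂ A) := by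
  have hsa : IsSelfAdjoint ((x * star x : A) : Unitization ℂ A) :=
    (IsSelfAdjoint.mul_star_self x).inr ℂ
  nth_rewrite 2 [← cfc_id ℝ ((x * star x : A) : Unitization ℂ A) hsa]
  rw [← cfc_mul f id _ hf continuousOn_id,
    ← cfc_mul (fun x => f x * id x) f _ (hf.mul continuousOn_id) hf]
  exact cfc_congr fun t _ => by simp [id]; ring

lemma cfc_mul_inr_mul_star (x : A) (f : ℝ → ℝ)
    (hf : ContinuousOn f (spectrum ℝ ((x * star x : A) : Unitization ℂ A))) :
    (cfc f ((x * star x : A) : Unitization ℂ A) * (x : Unitization ℂ A)) *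
        star (cfc f ((x * star x : A) : Unitization ℂ A) * (x : Unitization ℂ A))
      = cfc (fun t : ℝ => f t ^ 2 * t) ((x * star x : A) : Unitization ℂ A) := by
  have hstar : star (cfc f ((x * star x : A) : Unitization ℂ A))
      = cfc f ((x * star x : A) : Unitization ℂ A) :=
    (cfc_predicate f ((x * star x : A) : Unitization ℂ A) : IsSelfAdjoint _).star_eq
  rw [star_mul, hstar, mul_assoc, ← mul_assoc (x : Unitization ℂ A), inr_mul_star,
    ← mul_assoc, cfc_mul_self_mul_cfc x f hf]

lemma aux_norm_sq (x : A) (f : ℝ → ℝ)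
    (hf : ContinuousOn f (spectrum ℝ ((x * star x : A) : Unitization ℂ A))) :
    ‖cfc f ((x * star x : A) : Unitization ℂ A) * (x : Unitization ℂ A)‖ ^ 2
      = ‖cfc (fun t : ℝ => f t ^ 2 * t) ((x * star x : A) : Unitization ℂ A)‖ := by
  rw [sq, ← CStarRing.norm_self_mul_star, cfc_mul_inr_mul_star x f hf]

lemma spec_nonneg (x : A) :
    ∀ t ∈ spectrum ℝ ((x * star x : A) : Unitization ℂ A), 0 ≤ t := by
  intro t ht
  refine spectrum_star_mul_self_nonneg (b := star (x : Unitization ℂ A)) t ?_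
  rwa [star_star, inr_mul_star]

lemma spec_le_norm (x : A) :
    ∀ t ∈ spectrum ℝ ((x * star x : A) : Unitization ℂ A), t ≤ ‖x * star x‖ := by
  intro t ht
  have := spectrum.norm_le_norm_of_mem ht
  rw [Real.norm_eq_abs, Unitization.norm_inr] at this
  exact (le_abs_self t).trans this

lemma aux_norm_le (x : A) (f : ℝ → ℝ)
    (hf : ContinuousOn f (spectrum ℝ ((x * star x : A) : Unitization ℂ A)))
    {C : ℝ} (hC : 0 ≤ C)
    (hb : ∀ t ∈ spectrum ℝ ((x * star x : A) : Unitization ℂ A), f t ^ 2 * t ≤ C ^ 2) :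
    ‖cfc f ((x * star x : A) : Unitization ℂ A) * (x : Unitization ℂ A)‖ ≤ C := by
  have h1 := aux_norm_sq x f hf
  have h2 : ‖cfc (fun t : ℝ => f t ^ 2 * t) ((x * star x : A) : Unitization ℂ A)‖ ≤ C ^ 2 := by
    refine norm_cfc_le (by positivity) fun t ht => ?_
    rw [Real.norm_eq_abs, abs_of_nonneg (by have := spec_nonneg x t ht; positivity)]
    exact hb t ht
  nlinarith [norm_nonneg (cfc f ((x * star x : A) : Unitization ℂ A) * (x : Unitization ℂ A))]

end CStar

set_option maxHeartbeats 2000000 in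
set_option synthInstance.maxHeartbeats 200000 in
/-- Let `A` be a C*-algebra and `x ∈ A`.  Then `x = b·c`, where
`b = (x x*)^{1/4}` (defined by the nonunital continuous functional calculus) and
`c = lim_{n→∞} (1/n + x x*)^{-1/4} x`, the limit existing in norm.  The terms
`(1/n + x x*)^{-1/4} x` are computed in the unitization of `A`, but the limit `c` lies in `A`.
Moreover `‖b‖² = ‖x‖ = ‖c‖²`. -/
theorem cstar_factorization
    {A : Type*} [NonUnitalCStarAlgebra A] (x : A) :
    ∃ c : A,
      Tendsto
        (fun n : ℕ =>
          cfc (fun t : ℝ => (1 / (n : ℝ) + t) ^ (-(1 / 4 : ℝ)))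
              ((x * star x : A) : Unitization ℂ A) * (x : Unitization ℂ A))
        atTop (𝓝 (c : Unitization ℂ A)) ∧
      x = cfcₙ (fun t : ℝ => t ^ (1 / 4 : ℝ)) (x * star x) * c ∧
      ‖cfcₙ (fun t : ℝ => t ^ (1 / 4 : ℝ)) (x * star x)‖ ^ 2 = ‖x‖ ∧
      ‖c‖ ^ 2 = ‖x‖ := by
  set au : Unitization ℂ A := ((x * star x : A) : Unitization ℂ A) with hau_def
  set xu : Unitization ℂ A := (x : Unitization ℂ A) with hxu_def
  set F : ℕ → ℝ → ℝ := fun n t => (1 / (n : ℝ) + t) ^ (-(1 / 4 : ℝ)) with hF_def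
  set seq : ℕ → Unitization ℂ A := fun n => cfc (F n) au * xu with hseq_def
  -- continuity facts
  have hFcont : ∀ s : ℝ, 0 < s →
      ContinuousOn (fun t : ℝ => (s + t) ^ (-(1 / 4 : ℝ))) (spectrum ℝ au) := by
    intro s hs t ht
    have h0 := spec_nonneg x t ht
    exact ContinuousAt.continuousWithinAt <|
      (Real.continuousAt_rpow_const _ _ (Or.inl (by positivity))).comp
        (continuousAt_const.add continuousAt_id)
  have hFcont' : ∀ n : ℕ, 1 ≤ n → ContinuousOn (F n) (spectrum ℝ au) := by
    intro n hn
    have : (0:ℝ) < 1 / (n:ℝ) := by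
      have : (0:ℝ) < (n:ℝ) := by exact_mod_cast hn
      positivity
    exact hFcont _ this
  have hgc : Continuous (fun t : ℝ => t ^ (1/4:ℝ)) :=
    Real.continuous_rpow_const (by norm_num)
  have hg2c : Continuous (fun t : ℝ => t ^ (1/2:ℝ)) :=
    Real.continuous_rpow_const (by norm_num)
  -- Cauchy estimate
  have hdist : ∀ n m : ℕ, 1 ≤ n → 1 ≤ m →
      ‖seq n - seq m‖ ≤ (1/(n:ℝ)) ^ (1/4:ℝ) + (1/(m:ℝ)) ^ (1/4:ℝ) := by
    intro n m hn hm
    have hsn : (0:ℝ) < 1 / (n:ℝ) := by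
      have : (0:ℝ) < (n:ℝ) := by exact_mod_cast hn
      positivity
    have hsm : (0:ℝ) < 1 / (m:ℝ) := by
      have : (0:ℝ) < (m:ℝ) := by exact_mod_cast hm
      positivity
    have hsub : seq n - seq m = cfc (fun t => F n t - F m t) au * xu := by
      rw [hseq_def]
      rw [cfc_sub (F n) (F m) au (hFcont' n hn) (hFcont' m hm), sub_mul]
    rw [hsub]
    refine aux_norm_le x _ ((hFcont' n hn).sub (hFcont' m hm)) (by positivity) ?_
    intro t ht
    have h0 := spec_nonneg x t ht
    obtain ⟨e1n, e2n⟩ := aux4 hsn h0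
    obtain ⟨e1m, e2m⟩ := aux4 hsm h0
    have ht2 : (t ^ (1/2:ℝ)) ^ 2 = t := by
      rw [← Real.rpow_natCast (t ^ (1/2:ℝ)) 2, ← Real.rpow_mul h0]; norm_num
    have hident : (F n t - F m t) ^ 2 * t
        = (t ^ (1/2:ℝ) * F n t - t ^ (1/2:ℝ) * F m t) ^ 2 := by
      linear_combination (-(F n t - F m t)^2) * ht2
    simp only [Pi.sub_apply]; rw [hident]
    have habs : -( (1/(n:ℝ))^(1/4:ℝ) + (1/(m:ℝ))^(1/4:ℝ) )
        ≤ t ^ (1/2:ℝ) * F n t - t ^ (1/2:ℝ) * F m t ∧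
        t ^ (1/2:ℝ) * F n t - t ^ (1/2:ℝ) * F m t
        ≤ (1/(n:ℝ))^(1/4:ℝ) + (1/(m:ℝ))^(1/4:ℝ) := by
      constructor <;> · simp only [hF_def]; linarith
    nlinarith [habs.1, habs.2]
  -- Cauchy sequence and limit
  have hcs : CauchySeq (fun n => seq (n + 1)) := by
    refine cauchySeq_of_le_tendsto_0 (fun N => 2 * (1/((N:ℝ)+1)) ^ (1/4:ℝ)) ?_ ?_
    · intro n m N hn hm
      rw [dist_eq_norm]
      refine (hdist (n+1) (m+1) (by omega) (by omega)).trans ?_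
      have hmono : ∀ k : ℕ, N ≤ k →
          (1/((k:ℝ)+1)) ^ (1/4:ℝ) ≤ (1/((N:ℝ)+1)) ^ (1/4:ℝ) := by
        intro k hk
        refine Real.rpow_le_rpow (by positivity) ?_ (by norm_num)
        have : ((N:ℝ)+1) ≤ ((k:ℝ)+1) := by
          have : (N:ℝ) ≤ (k:ℝ) := by exact_mod_cast hk
          linarith
        exact one_div_le_one_div_of_le (by positivity) this
      have h1 := hmono n hn
      have h2 := hmono m hm
      push_cast at h1 h2 ⊢
      linarith
    · have t1 : Tendsto (fun N : ℕ => 1/((N:ℝ)+1)) atTop (𝓝 0) :=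
        tendsto_one_div_add_atTop_nhds_zero_nat
      have t2 : Tendsto (fun N : ℕ => (1/((N:ℝ)+1)) ^ (1/4:ℝ)) atTop (𝓝 0) := by
        have hc := (Real.continuous_rpow_const (by norm_num : (0:ℝ) ≤ 1/4)).continuousAt
          (x := (0:ℝ))
        have := hc.tendsto.comp t1
        simpa [Function.comp_def, Real.zero_rpow (by norm_num : (1/4:ℝ) ≠ 0)] using this
      simpa using t2.const_mul (2:ℝ)
  obtain ⟨L, hL⟩ := cauchySeq_tendsto_of_complete hcs
  have hLseq : Tendsto seq atTop (𝓝 L) := (tendsto_add_atTop_iff_nat 1).mp hL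
  -- the limit lies in the range of `inr`
  have hrange : ∀ n, seq n ∈ Set.range ((↑) : A → Unitization ℂ A) := by
    intro n
    refine ⟨(cfc (F n) au).fst • x + (cfc (F n) au).snd * x, ?_⟩
    have hsn : seq n = cfc (F n) au * xu := rfl
    rw [hsn]
    conv_rhs => rw [← Unitization.inl_fst_add_inr_snd_eq (cfc (F n) au)]
    rw [add_mul, hxu_def, Unitization.inl_mul_inr, ← Unitization.inr_mul, ← Unitization.inr_add]
  have hclosed : IsClosed (Set.range ((↑) : A → Unitization ℂ A)) :=
    (Unitization.isometry_inr (𝕜 := ℂ) (A := A)).isClosedEmbedding.isClosed_range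
  obtain ⟨c, hc⟩ : L ∈ Set.range ((↑) : A → Unitization ℂ A) :=
    hclosed.mem_of_tendsto hLseq (Filter.Eventually.of_forall hrange)
  have hb : ((cfcₙ (fun t : ℝ => t ^ (1/4:ℝ)) (x * star x) : A) : Unitization ℂ A)
      = cfc (fun t : ℝ => t ^ (1/4:ℝ)) au :=
    Unitization.real_cfcₙ_eq_cfc_inr _ _ (Real.zero_rpow (by norm_num))
  have hsa : IsSelfAdjoint au := (IsSelfAdjoint.mul_star_self x).inr ℂ
  have hzpow : ∀ e : ℝ, 0 < e → Tendsto (fun n : ℕ => (1/(n:ℝ)) ^ e) atTop (𝓝 0) := by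
    intro e he
    have hcont := (Real.continuous_rpow_const he.le).continuousAt (x := (0:ℝ))
    have := hcont.tendsto.comp tendsto_one_div_atTop_nhds_zero_nat
    simpa [Function.comp_def, Real.zero_rpow he.ne'] using this
  -- the square-root computation
  have hmul2 : cfc (fun t : ℝ => t ^ (1/2:ℝ)) au * cfc (fun t : ℝ => t ^ (1/2:ℝ)) au = au := by
    rw [← cfc_mul _ _ au hg2c.continuousOn hg2c.continuousOn]
    conv_rhs => rw [← cfc_id ℝ au hsa]
    refine cfc_congr fun t ht => ?_
    have h0 := spec_nonneg x t ht
    simp only [id_eq]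
    rcases h0.eq_or_lt with h | h
    · rw [← h, Real.zero_rpow (by norm_num : (1/2:ℝ) ≠ 0)]; simp
    · rw [← Real.rpow_add h]; norm_num
  have hstar2 : star (cfc (fun t : ℝ => t ^ (1/2:ℝ)) au) = cfc (fun t : ℝ => t ^ (1/2:ℝ)) au :=
    (cfc_predicate (fun t : ℝ => t ^ (1/2:ℝ)) au : IsSelfAdjoint _).star_eq
  have hnorm_au : ‖au‖ = ‖x‖ * ‖x‖ := by
    rw [hau_def, Unitization.norm_inr, CStarRing.norm_self_mul_star]
  have hsqrt_norm : ‖cfc (fun t : ℝ => t ^ (1/2:ℝ)) au‖ = ‖x‖ := by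
    have h1 : ‖cfc (fun t : ℝ => t ^ (1/2:ℝ)) au‖ ^ 2 = ‖au‖ := by
      rw [sq, ← CStarRing.norm_self_mul_star, hstar2, hmul2]
    nlinarith [norm_nonneg (cfc (fun t : ℝ => t ^ (1/2:ℝ)) au), norm_nonneg x]
  have hmul4 : cfc (fun t : ℝ => t ^ (1/4:ℝ)) au * cfc (fun t : ℝ => t ^ (1/4:ℝ)) au
      = cfc (fun t : ℝ => t ^ (1/2:ℝ)) au := by
    rw [← cfc_mul _ _ au hgc.continuousOn hgc.continuousOn]
    refine cfc_congr fun t ht => ?_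
    have h0 := spec_nonneg x t ht
    rcases h0.eq_or_lt with h | h
    · rw [← h, Real.zero_rpow (by norm_num : (1/4:ℝ) ≠ 0),
        Real.zero_rpow (by norm_num : (1/2:ℝ) ≠ 0)]; simp
    · rw [← Real.rpow_add h]; norm_num
  have hstar4 : star (cfc (fun t : ℝ => t ^ (1/4:ℝ)) au) = cfc (fun t : ℝ => t ^ (1/4:ℝ)) au :=
    (cfc_predicate (fun t : ℝ => t ^ (1/4:ℝ)) au : IsSelfAdjoint _).star_eq
  have hb_norm : ‖cfcₙ (fun t : ℝ => t ^ (1/4:ℝ)) (x * star x)‖ ^ 2 = ‖x‖ := by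
    have h1 : ‖cfcₙ (fun t : ℝ => t ^ (1/4:ℝ)) (x * star x)‖
        = ‖cfc (fun t : ℝ => t ^ (1/4:ℝ)) au‖ := by
      rw [← Unitization.norm_inr (𝕜 := ℂ) (cfcₙ (fun t : ℝ => t ^ (1/4:ℝ)) (x * star x)), hb]
    rw [h1, sq, ← CStarRing.norm_self_mul_star, hstar4, hmul4, hsqrt_norm]
  refine ⟨c, by rwa [hc], ?_, ?_, ?_⟩
  · -- `x = b * c`
    have hest : ∀ n : ℕ, 1 ≤ n →
        ‖cfc (fun t : ℝ => t ^ (1/4:ℝ)) au * seq n - xu‖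
          ≤ ‖x * star x‖ ^ (1/4:ℝ) * (1/(n:ℝ)) ^ (1/4:ℝ) := by
      intro n hn
      have hsn : (0:ℝ) < 1 / (n:ℝ) := by
        have : (0:ℝ) < (n:ℝ) := by exact_mod_cast hn
        positivity
      have hM : (0:ℝ) ≤ ‖x * star x‖ ^ (1/4:ℝ) := Real.rpow_nonneg (norm_nonneg _) _
      have hseqn : seq n = cfc (F n) au * xu := rfl
      have hconth : ContinuousOn (fun t : ℝ => t ^ (1/4:ℝ) * F n t) (spectrum ℝ au) :=
        hgc.continuousOn.mul (hFcont' n hn)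
      have he : cfc (fun t : ℝ => t ^ (1/4:ℝ)) au * seq n - xu
          = cfc (fun t : ℝ => t ^ (1/4:ℝ) * F n t - 1) au * xu := by
        rw [hseqn, ← mul_assoc,
          show cfc (fun t : ℝ => t ^ (1/4:ℝ)) au * cfc (F n) au
              = cfc (fun t : ℝ => t ^ (1/4:ℝ) * F n t) au from
            (cfc_mul _ _ au hgc.continuousOn (hFcont' n hn)).symm,
          cfc_sub (fun t : ℝ => t ^ (1/4:ℝ) * F n t) (fun _ => (1:ℝ)) au hconth
            continuousOn_const,
          cfc_const_one ℝ au, sub_mul, one_mul]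
      rw [he]
      refine aux_norm_le x _ (hconth.sub continuousOn_const) (by positivity) ?_
      intro t ht
      have h0 := spec_nonneg x t ht
      have hle := spec_le_norm x t ht
      obtain ⟨e1, e2⟩ := aux4 hsn h0
      have hrM : t ^ (1/4:ℝ) ≤ ‖x * star x‖ ^ (1/4:ℝ) :=
        Real.rpow_le_rpow h0 hle (by norm_num)
      have hr0 : (0:ℝ) ≤ t ^ (1/4:ℝ) := Real.rpow_nonneg h0 _
      have h14 : (t ^ (1/4:ℝ)) ^ 2 = t ^ (1/2:ℝ) := by
        rw [← Real.rpow_natCast (t ^ (1/4:ℝ)) 2, ← Real.rpow_mul h0]; norm_num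
      have h4 : (t ^ (1/4:ℝ)) ^ (4:ℕ) = t := rpow_pow_quarter h0
      have hident : (t ^ (1/4:ℝ) * F n t - 1) ^ 2 * t
          = (t ^ (1/4:ℝ) * (t ^ (1/4:ℝ) - t ^ (1/2:ℝ) * F n t)) ^ 2 := by
        rw [← h14]
        linear_combination (-(t ^ (1/4:ℝ) * F n t - 1) ^ 2) * h4
      simp only [Pi.sub_apply]; rw [hident]
      have hfac0 : (0:ℝ) ≤ t ^ (1/4:ℝ) * (t ^ (1/4:ℝ) - t ^ (1/2:ℝ) * F n t) :=
        mul_nonneg hr0 e1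
      have hfac : t ^ (1/4:ℝ) * (t ^ (1/4:ℝ) - t ^ (1/2:ℝ) * F n t)
          ≤ ‖x * star x‖ ^ (1/4:ℝ) * (1/(n:ℝ)) ^ (1/4:ℝ) := mul_le_mul hrM e2 e1 hM
      exact pow_le_pow_left₀ hfac0 hfac 2
    have hMz : Tendsto (fun n : ℕ => ‖x * star x‖ ^ (1/4:ℝ) * (1/(n:ℝ)) ^ (1/4:ℝ))
        atTop (𝓝 0) := by
      simpa using (hzpow (1/4) (by norm_num)).const_mul (‖x * star x‖ ^ (1/4:ℝ))
    have hbx : Tendsto (fun n => cfc (fun t : ℝ => t ^ (1/4:ℝ)) au * seq n) atTop (𝓝 xu) := by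
      rw [tendsto_iff_norm_sub_tendsto_zero]
      refine squeeze_zero_norm' ?_ hMz
      filter_upwards [eventually_ge_atTop 1] with n hn
      simpa [Real.norm_eq_abs, abs_of_nonneg (norm_nonneg _)] using hest n hn
    have hbl : cfc (fun t : ℝ => t ^ (1/4:ℝ)) au * L = xu :=
      tendsto_nhds_unique (hLseq.const_mul _) hbx
    apply Unitization.inr_injective (R := ℂ)
    rw [Unitization.inr_mul, hb, hc, hbl]
  · exact hb_norm
  · -- `‖c‖ ^ 2 = ‖x‖`
    have hccstar : L * star L = cfc (fun t : ℝ => t ^ (1/2:ℝ)) au := by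
      have h1 : Tendsto (fun n => seq n * star (seq n)) atTop (𝓝 (L * star L)) :=
        hLseq.mul hLseq.star
      have h2 : Tendsto (fun n => seq n * star (seq n)) atTop
          (𝓝 (cfc (fun t : ℝ => t ^ (1/2:ℝ)) au)) := by
        rw [tendsto_iff_norm_sub_tendsto_zero]
        refine squeeze_zero_norm' ?_ (hzpow (1/2) (by norm_num))
        filter_upwards [eventually_ge_atTop 1] with n hn
        have hsn : (0:ℝ) < 1 / (n:ℝ) := by
          have : (0:ℝ) < (n:ℝ) := by exact_mod_cast hn
          positivity
        have hseqn : seq n = cfc (F n) au * xu := rfl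
        have hkey : seq n * star (seq n) = cfc (fun t : ℝ => F n t ^ 2 * t) au := by
          rw [hseqn]; exact cfc_mul_inr_mul_star x (F n) (hFcont' n hn)
        have hcont2 : ContinuousOn (fun t : ℝ => F n t ^ 2 * t) (spectrum ℝ au) :=
          ((hFcont' n hn).pow 2).mul continuousOn_id
        have hsub : seq n * star (seq n) - cfc (fun t : ℝ => t ^ (1/2:ℝ)) au
            = cfc (fun t : ℝ => F n t ^ 2 * t - t ^ (1/2:ℝ)) au := by
          rw [hkey, cfc_sub _ _ au hcont2 hg2c.continuousOn]
        rw [Real.norm_eq_abs, abs_of_nonneg (norm_nonneg _), hsub]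
        refine norm_cfc_le (by positivity) ?_
        intro t ht
        have h0 := spec_nonneg x t ht
        have hst : (0:ℝ) < 1/(n:ℝ) + t := by linarith
        obtain ⟨e1, e2⟩ := aux2 hsn h0
        have hFn2 : F n t ^ 2 = (1/(n:ℝ) + t) ^ (-(1/2):ℝ) := by
          simp only [hF_def]
          rw [← Real.rpow_natCast ((1/(n:ℝ) + t) ^ (-(1/4):ℝ)) 2, ← Real.rpow_mul hst.le]
          norm_num
        have : F n t ^ 2 * t - t ^ (1/2:ℝ)
            = -(t ^ (1/2:ℝ) - t * (1/(n:ℝ) + t) ^ (-(1/2):ℝ)) := by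
          rw [hFn2]; ring
        rw [this, norm_neg, Real.norm_eq_abs, abs_of_nonneg e1]
        exact e2
      exact tendsto_nhds_unique h1 h2
    have h1 : ‖c‖ ^ 2 = ‖L * star L‖ := by
      rw [sq, ← CStarRing.norm_self_mul_star, ← Unitization.norm_inr (𝕜 := ℂ),
        Unitization.inr_mul, Unitization.inr_star, hc]
    rw [h1, hccstar, hsqrt_norm]
end

section
/- Let G be a groupoid with Haar system, ν a measure on G⁰, and X₁'' ⊆ G a subset such that X₁'' ∩ inv(X₁'') is conull for ν∘α (where inv is the inversion map). Let X₀ be the set of all x ∈ G⁰ such that g ∈ X₁'' ∩ inv(X₁'') for α^x-almost all g ∈ G^x; then X₀ is ν-conull. Assume further that X₁'' has the property: if k ∈ G and there is a sequence (h_n) in G^{r(k)} with h_n, h_n⁻¹k ∈ X₁'' and h_n → u(r(k)), then k ∈ X₁''. Then G|_{X₀} := {g ∈ G : r(g), s(g) ∈ X₀} ⊆ X₁''. -/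
open CategoryTheory MeasureTheory Filter Topology

universe u v

variable {Obj : Type u} [Groupoid.{v} Obj]

attribute [local instance] Classical.propDecidable

/-- The total arrow space of a groupoid, as a sigma type; an arrow `g : z ⟶ x` has source
`s g = z` and range `r g = x`. -/
def GArr (Obj : Type u) [Groupoid.{v} Obj] : Type max u v := (z : Obj) × (x : Obj) × (z ⟶ x)

/-- An arrow as a point of the total arrow space. -/
def GArr.mk {z x : Obj} (g : z ⟶ x) : GArr Obj := ⟨z, x, g⟩

/-- The inversion map of the groupoid on its total arrow space. -/
def GArr.ginv : GArr Obj → GArr Obj := fun p => ⟨p.2.1, p.1, Groupoid.inv p.2.2⟩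

/-- Left translation by `g : x ⟶ y` on the total arrow space: it maps the fibre
`G^x = r⁻¹(x)` to `G^y` by `h ↦ g·h = h ≫ g`, and is the identity elsewhere. -/
noncomputable def GArr.transl {x y : Obj} (g : x ⟶ y) : GArr Obj → GArr Obj := fun p =>
  if h : p.2.1 = x then ⟨p.1, y, (show p.1 ⟶ x from h ▸ p.2.2) ≫ g⟩ else p

private lemma GArr.ginv_transl {z x : Obj} (k : z ⟶ x) (p : GArr Obj) (e : p.2.1 = x) :
    GArr.ginv (GArr.transl (Groupoid.inv k) p)
      = GArr.mk (k ≫ Groupoid.inv (show p.1 ⟶ x from e ▸ p.2.2)) := by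
  obtain ⟨w, x', g⟩ := p
  dsimp at e
  subst e
  simp only [GArr.transl, GArr.ginv, GArr.mk]
  erw [dif_pos rfl]
  simp [Groupoid.inv_eq_inv]
  rfl

/-- Let `G` be a (second countable, locally compact, Hausdorff) groupoid
with Haar system `α`, `ν` a measure on `G⁰`, and `X₁'' ⊆ G` a subset such that
`X₁'' ∩ inv(X₁'')` is conull for `ν∘α`.  Let `X₀` be the set of all `x ∈ G⁰` such that
`g ∈ X₁'' ∩ inv(X₁'')` for `α^x`-almost all `g ∈ G^x`; then `X₀` is `ν`-conull.  Assume
further that `X₁''` has the property: if `k ∈ G` and there is a sequence `(h_n)` in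
`G^{r(k)}` with `h_n, h_n⁻¹k ∈ X₁''` and `h_n → u(r(k))`, then `k ∈ X₁''`.  Then
`G|_{X₀} = {g : r(g), s(g) ∈ X₀} ⊆ X₁''`. -/
theorem ramsay_conull_lemma
    [TopologicalSpace (GArr Obj)] [FirstCountableTopology (GArr Obj)]
    [MeasurableSpace (GArr Obj)] [MeasurableSpace Obj]
    (ν : Measure Obj) (α : Obj → Measure (GArr Obj)) (hα : Measurable α)
    -- Haar system axioms: concentration on the fibres, left invariance, full support
    (hconc : ∀ x : Obj, α x {p : GArr Obj | p.2.1 ≠ x} = 0)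
    (hinv : ∀ {x y : Obj} (g : x ⟶ y), (α x).map (GArr.transl g) = α y)
    (hfull : ∀ (x : Obj) (U : Set (GArr Obj)), IsOpen U → (∃ p ∈ U, p.2.1 = x) → 0 < α x U)
    (X₁ : Set (GArr Obj))
    -- `X₁'' ∩ inv (X₁'')` is conull for `ν ∘ α`
    (hconull : (ν.bind α) ((X₁ ∩ GArr.ginv ⁻¹' X₁)ᶜ) = 0)
    -- the closure property of `X₁''`
    (hclosure : ∀ {z x : Obj} (k : z ⟶ x),
      (∃ hseq : ℕ → GArr Obj,
        (∀ n, (hseq n).2.1 = x) ∧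
        (∀ n, hseq n ∈ X₁) ∧
        (∀ n (e : (hseq n).2.1 = x),
          GArr.mk (k ≫ Groupoid.inv (show (hseq n).1 ⟶ x from e ▸ (hseq n).2.2)) ∈ X₁) ∧
        Tendsto hseq atTop (𝓝 (GArr.mk (𝟙 x)))) →
      GArr.mk k ∈ X₁) :
    -- `X₀` is `ν`-conull and `G|_{X₀} ⊆ X₁''`
    ν {x : Obj | ¬ α x ((X₁ ∩ GArr.ginv ⁻¹' X₁)ᶜ) = 0} = 0 ∧
    ∀ {z x : Obj} (k : z ⟶ x),
      α x ((X₁ ∩ GArr.ginv ⁻¹' X₁)ᶜ) = 0 →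
      α z ((X₁ ∩ GArr.ginv ⁻¹' X₁)ᶜ) = 0 →
      GArr.mk k ∈ X₁ := by
  set S := X₁ ∩ GArr.ginv ⁻¹' X₁ with hSdef
  constructor
  · obtain ⟨T, hTsub, hTm, hT0⟩ := exists_measurable_superset_of_null hconull
    rw [Measure.bind_apply hTm hα.aemeasurable] at hT0
    have hmeas : Measurable fun x => α x T := (Measure.measurable_coe hTm).comp hα
    have hae := (lintegral_eq_zero_iff hmeas).mp hT0
    rw [Filter.EventuallyEq, ae_iff] at hae
    refine measure_mono_null ?_ hae
    intro x hx
    simp only [Set.mem_setOf_eq] at hx ⊢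
    intro hT
    exact hx (le_antisymm (le_trans (measure_mono hTsub) (le_of_eq hT)) zero_le)
  · intro z x k hx hz
    have hzne : α z ≠ 0 := by
      intro h0
      have h := hfull z Set.univ isOpen_univ ⟨GArr.mk (𝟙 z), trivial, rfl⟩
      rw [h0] at h
      simp at h
    have haem : AEMeasurable (GArr.transl (Groupoid.inv k)) (α x) := by
      by_contra hm
      exact hzne ((hinv (Groupoid.inv k)).symm.trans (Measure.map_of_not_aemeasurable hm))
    set N : Set (GArr Obj) :=
      Sᶜ ∪ GArr.transl (Groupoid.inv k) ⁻¹' Sᶜ ∪ {p | p.2.1 ≠ x} with hNdef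
    have hN0 : α x N = 0 := by
      have h2 : α x (GArr.transl (Groupoid.inv k) ⁻¹' Sᶜ) = 0 := by
        refine le_antisymm ?_ zero_le
        calc α x (GArr.transl (Groupoid.inv k) ⁻¹' Sᶜ)
            ≤ ((α x).map (GArr.transl (Groupoid.inv k))) Sᶜ := Measure.le_map_apply haem _
          _ = α z Sᶜ := by rw [hinv]
          _ = 0 := hz
      refine le_antisymm ?_ zero_le
      calc α x N ≤ α x (Sᶜ ∪ GArr.transl (Groupoid.inv k) ⁻¹' Sᶜ) + α x {p | p.2.1 ≠ x} :=
            measure_union_le _ _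
        _ ≤ (α x Sᶜ + α x (GArr.transl (Groupoid.inv k) ⁻¹' Sᶜ)) + α x {p | p.2.1 ≠ x} :=
            add_le_add_left (measure_union_le _ _) _
        _ = 0 := by rw [hx, h2, hconc x]; simp
    obtain ⟨U, hU⟩ := (𝓝 (GArr.mk (𝟙 x))).exists_antitone_basis
    have hsel : ∀ n : ℕ, ∃ p, p ∈ interior (U n) ∩ Nᶜ := by
      intro n
      have hU_mem : GArr.mk (𝟙 x) ∈ interior (U n) :=
        mem_interior_iff_mem_nhds.mpr (hU.1.mem_of_mem trivial)
      have hpos : 0 < α x (interior (U n)) :=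
        hfull x _ isOpen_interior ⟨GArr.mk (𝟙 x), hU_mem, rfl⟩
      by_contra h
      push_neg at h
      have hsub : interior (U n) ⊆ N := fun p hp => by
        by_contra hpn
        exact h p ⟨hp, hpn⟩
      exact hpos.ne' (measure_mono_null hsub hN0)
    choose hseq hmem using hsel
    have key : ∀ n, hseq n ∈ S ∧ GArr.transl (Groupoid.inv k) (hseq n) ∈ S ∧
        (hseq n).2.1 = x := by
      intro n
      have h2 := (hmem n).2
      simp only [hNdef, Set.mem_compl_iff, Set.mem_union, Set.mem_preimage, Set.mem_setOf_eq,
        not_or, not_not] at h2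
      exact ⟨h2.1.1, h2.1.2, h2.2⟩
    refine hclosure k ⟨hseq, fun n => (key n).2.2, fun n => (key n).1.1, ?_, ?_⟩
    · intro n e
      have hm2 := (key n).2.1.2
      rwa [Set.mem_preimage, GArr.ginv_transl k _ e] at hm2
    · exact hU.tendsto fun n => interior_subset (hmem n).1
end
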